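/- Let p* = (t*, f*) ∈ 𝔻 and let R be a maximal antichain above p* in 𝔻, with A = {tr(r) : r ∈ R} the set of trunks of members of R. Then there is no set X of finite sequences of natural numbers satisfying all of the following: t* ∈ X; every ρ ∈ X has t* as an initial segment and satisfies f*(l) ≤ ρ(l) for every l with |t*| ≤ l < |ρ|; for every ρ ∈ X there is no ν ∈ A such that t* is an initial segment of ν, f*(l) ≤ ν(l) for every l with |t*| ≤ l < |ν|, |ν| ≤ |ρ|, and ρ(l) ≤ ν(l) for every l with |t*| ≤ l < |ν|; and for every ρ ∈ X the set {k ∈ ℕ : ρ⌢⟨k⟩ ∈ X} is infinite. (This expresses that the Hechler rank rk_{p*,A}(t*) is a countable ordinal, i.e., is not ∞.) -/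

import Mathlib

/-- A Hechler condition: a pair `(t, f)` where the function `f : ℕ → ℕ` extends
the finite sequence `t`. -/
def HCond (p : List ℕ × (ℕ → ℕ)) : Prop :=
  ∀ i < p.1.length, p.2 i = p.1.getD i 0

/-- The Hechler order: `(t, f) ≤ (t', f')` iff `t` is an initial segment of `t'`
and `f n ≤ f' n` for all `n`. -/
def HLe (p q : List ℕ × (ℕ → ℕ)) : Prop :=
  p.1 <+: q.1 ∧ ∀ n, p.2 n ≤ q.2 n

/-- Compatibility of Hechler conditions. -/
def HCompat (p q : List ℕ × (ℕ → ℕ)) : Prop :=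
  ∃ r, HCond r ∧ HLe p r ∧ HLe q r

/-- `t` is an initial segment of the function `x : ℕ → ℕ`. -/
def PrefixOf (t : List ℕ) (x : ℕ → ℕ) : Prop :=
  ∀ i < t.length, x i = t.getD i 0

/-- `set(p)`: the reals extending the trunk of `p` and dominating its side function. -/
def HSet (p : List ℕ × (ℕ → ℕ)) : Set (ℕ → ℕ) :=
  {x | PrefixOf p.1 x ∧ ∀ n, p.2 n ≤ x n}

/-- `X` is `𝔻`-nowhere dense. -/
def HNwd (X : Set (ℕ → ℕ)) : Prop :=
  ∀ p, HCond p → ∃ q, HCond q ∧ HLe p q ∧ HSet q ∩ X = ∅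

/-- The ideal `I_{𝔻,ℵ₀}`: sets covered by countably many `𝔻`-nowhere dense sets. -/
def HIdeal (X : Set (ℕ → ℕ)) : Prop :=
  ∃ B : ℕ → Set (ℕ → ℕ), (∀ n, HNwd (B n)) ∧ X ⊆ ⋃ n, B n


private lemma prefix_getD {a b : List ℕ} (h : a <+: b) {i : ℕ} (hi : i < a.length) :
    a.getD i 0 = b.getD i 0 := by
  rw [List.getD_eq_getElem _ _ hi, List.getD_eq_getElem _ _ (hi.trans_le h.length_le)]
  exact List.IsPrefix.getElem h hi

/-- If `R` is a maximal antichain above `p* = (t*, f*)` in Hechler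
forcing, with `A` the set of trunks of members of `R`, then the rank `rk_{p*,A}(t*)`
is not `∞`: there is no set `X` of finite sequences witnessing rank `≥ ω₁` at `t*`. -/
theorem hechler_rank_lt_omega_one
    (tstar : List ℕ) (fstar : ℕ → ℕ) (hp : HCond (tstar, fstar))
    (R : Set (List ℕ × (ℕ → ℕ)))
    (hRcond : ∀ r ∈ R, HCond r)
    (hRabove : ∀ r ∈ R, HLe (tstar, fstar) r)
    (hRanti : ∀ r ∈ R, ∀ r' ∈ R, r ≠ r' → ¬ HCompat r r')
    (hRmax : ∀ q, HCond q → HLe (tstar, fstar) q → ∃ r ∈ R, HCompat q r) :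
    ¬ ∃ X : Set (List ℕ),
        tstar ∈ X ∧
        (∀ ρ ∈ X, tstar <+: ρ ∧
          ∀ l, tstar.length ≤ l → l < ρ.length → fstar l ≤ ρ.getD l 0) ∧
        (∀ ρ ∈ X, ¬ ∃ ν : List ℕ, (∃ r ∈ R, r.1 = ν) ∧ tstar <+: ν ∧
            (∀ l, tstar.length ≤ l → l < ν.length → fstar l ≤ ν.getD l 0) ∧
            ν.length ≤ ρ.length ∧
            (∀ l, tstar.length ≤ l → l < ν.length → ρ.getD l 0 ≤ ν.getD l 0)) ∧
        (∀ ρ ∈ X, {k : ℕ | ρ ++ [k] ∈ X}.Infinite) := by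

  rintro ⟨X, hX0, hX1, hX2, hX3⟩
  have step : ∀ ρ : {ρ // ρ ∈ X}, ∃ k, ρ.1 ++ [k] ∈ X := fun ρ => (hX3 ρ.1 ρ.2).nonempty
  choose k hk using step
  set F : {ρ // ρ ∈ X} → {ρ // ρ ∈ X} := fun ρ => ⟨ρ.1 ++ [k ρ], hk ρ⟩ with hF
  set ρ : ℕ → List ℕ := fun n => (F^[n] ⟨tstar, hX0⟩).1 with hρ
  have hmem : ∀ n, ρ n ∈ X := fun n => (F^[n] ⟨tstar, hX0⟩).2
  have hiter : ∀ n, F^[n+1] ⟨tstar, hX0⟩ = F (F^[n] ⟨tstar, hX0⟩) := fun n =>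
    Function.iterate_succ_apply' F n _
  have hsucc : ∀ n, ρ n <+: ρ (n+1) := by
    intro n
    show (F^[n] ⟨tstar, hX0⟩).1 <+: (F^[n+1] ⟨tstar, hX0⟩).1
    rw [hiter n]
    exact List.prefix_append _ _
  have hlen : ∀ n, (ρ n).length = tstar.length + n := by
    intro n
    induction n with
    | zero => simp [hρ]
    | succ n ih =>
      have : ρ (n+1) = ρ n ++ [k (F^[n] ⟨tstar, hX0⟩)] := by
        show (F^[n+1] ⟨tstar, hX0⟩).1 = _
        rw [hiter n]
      rw [this]
      simp [ih]; omega
  have hmono : ∀ m n, m ≤ n → ρ m <+: ρ n := by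
    intro m n h
    induction n, h using Nat.le_induction with
    | base => exact List.prefix_refl _
    | succ n hmn ih => exact ih.trans (hsucc n)
  set x : ℕ → ℕ := fun n => (ρ (n+1)).getD n 0 with hx
  have hcoh : ∀ m l, l < (ρ m).length → (ρ m).getD l 0 = x l := by
    intro m l hl
    rcases le_total m (l+1) with h | h
    · exact prefix_getD (hmono m (l+1) h) hl
    · have hl' : l < (ρ (l+1)).length := by rw [hlen]; omega
      exact (prefix_getD (hmono (l+1) m h) hl').symm
  have hxpref : ∀ n, PrefixOf (ρ n) x := by
    intro n i hi
    exact (hcoh n i hi).symm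
  have hqcond : HCond (tstar, x) := by
    intro i hi
    simp only at hi ⊢
    have h1 : tstar <+: ρ (i+1) := (hX1 _ (hmem (i+1))).1
    show (ρ (i+1)).getD i 0 = tstar.getD i 0
    exact (prefix_getD h1 hi).symm
  have hqle : HLe (tstar, fstar) (tstar, x) := by
    refine ⟨List.prefix_refl _, fun n => ?_⟩
    simp only [hx]
    rcases lt_or_ge n tstar.length with h | h
    · have h1 : tstar <+: ρ (n+1) := (hX1 _ (hmem (n+1))).1
      rw [← prefix_getD h1 h]
      exact (hp n h).le
    · exact (hX1 _ (hmem (n+1))).2 n h (by rw [hlen]; omega)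
  obtain ⟨r, hr, s, hsc, hqs, hrs⟩ := hRmax (tstar, x) hqcond hqle
  set ν := r.1 with hν
  have htν : tstar <+: ν := (hRabove r hr).1
  have hfν : ∀ l, tstar.length ≤ l → l < ν.length → fstar l ≤ ν.getD l 0 := by
    intro l _ hl
    calc fstar l ≤ r.2 l := (hRabove r hr).2 l
    _ = ν.getD l 0 := hRcond r hr l hl
  have hxν : ∀ l, l < ν.length → x l ≤ ν.getD l 0 := by
    intro l hl
    have hνs : ν <+: s.1 := hrs.1
    have hls : l < s.1.length := hl.trans_le hνs.length_le
    calc x l ≤ s.2 l := hqs.2 l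
    _ = s.1.getD l 0 := hsc l hls
    _ = ν.getD l 0 := (prefix_getD hνs hl).symm
  refine hX2 (ρ ν.length) (hmem _) ⟨ν, ⟨r, hr, rfl⟩, htν, hfν, ?_, ?_⟩
  · rw [hlen]; omega
  · intro l _ hl
    have hl' : l < (ρ ν.length).length := by rw [hlen]; omega
    rw [hcoh _ l hl']
    exact hxν l hl
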